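/- For every integer n ≥ 1, the derivative of the generalized degenerate Bernoulli polynomial satisfies d/dx β_{n,λ}^{(p)}(x) = Σ_{l=1}^{n} (-λ)^{l-1} (l-1)! C(n,l) β_{n-l,λ}^{(p)}(x). -/

import Mathlib

open Finset PowerSeries

noncomputable section

/-- The generalized (degenerate) falling factorial `(x)_{n,λ} = ∏_{j<n} (x - jλ)`. -/
def dfall (x : ℝ) (n : ℕ) (lam : ℝ) : ℝ := ∏ j ∈ Finset.range n, (x - j * lam)

/-- The degenerate exponential `e_λ^x(t) = Σ_{n≥0} (x)_{n,λ} t^n / n!` as a formal power series. -/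
def degExp (lam x : ℝ) : PowerSeries ℝ :=
  PowerSeries.mk fun n => dfall x n lam / n.factorial

/-- The degenerate Stirling numbers of the second kind, defined by
`(1/k!)(e_λ(t)-1)^k = Σ_{n≥k} S_{2,λ}(n,k) t^n/n!`. -/
def S2 (lam : ℝ) (n k : ℕ) : ℝ :=
  (n.factorial : ℝ) / (k.factorial : ℝ) * PowerSeries.coeff n ((degExp lam 1 - 1) ^ k)

/-- The degenerate Stirling polynomials of the second kind, defined by
`(1/k!)(e_λ(t)-1)^k e_λ^x(t) = Σ_{n≥k} S_{2,λ}(n,k|x) t^n/n!`. -/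
def S2p (lam : ℝ) (n k : ℕ) (x : ℝ) : ℝ :=
  (n.factorial : ℝ) / (k.factorial : ℝ) *
    PowerSeries.coeff n ((degExp lam 1 - 1) ^ k * degExp lam x)

/-- The degenerate logarithm `log_λ(1+t) = Σ_{n≥1} λ^{n-1}(1)_{n,1/λ} t^n/n!`. -/
def degLog (lam : ℝ) : PowerSeries ℝ :=
  PowerSeries.mk fun n => if n = 0 then 0 else lam ^ (n - 1) * dfall 1 n (1 / lam) / n.factorial

/-- The degenerate Stirling numbers of the first kind, defined by
`(1/k!)(log_λ(1+t))^k = Σ_{n≥k} S_{1,λ}(n,k) t^n/n!`. -/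
def S1 (lam : ℝ) (n k : ℕ) : ℝ :=
  (n.factorial : ℝ) / (k.factorial : ℝ) * PowerSeries.coeff n ((degLog lam) ^ k)

/-- Rising factorial `⟨a⟩_k = a(a+1)⋯(a+k-1)`. -/
def rising (a : ℝ) (k : ℕ) : ℝ := ∏ j ∈ Finset.range k, (a + j)

/-- The generalized degenerate Bernoulli polynomials `β_{n,λ}^{(p)}(x)`, defined by
`Σ_{n≥0} β_{n,λ}^{(p)}(x) t^n/n! = ₂F₁(1-λ,1;p+2;1-e_λ(t)) e_λ^x(t)`.
Since `1 - e_λ(t)` has zero constant term, the coefficient of `t^n` in the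
hypergeometric series only involves the terms with `k ≤ n`. -/
def genBetaPoly (lam : ℝ) (p : ℤ) (x : ℝ) (n : ℕ) : ℝ :=
  (n.factorial : ℝ) * PowerSeries.coeff n
    ((∑ k ∈ Finset.range (n + 1),
        (rising (1 - lam) k * rising 1 k / (rising ((p : ℝ) + 2) k * k.factorial)) •
          ((1 - degExp lam 1) ^ k)) * degExp lam x)

/-- The generalized degenerate Bernoulli numbers `β_{n,λ}^{(p)} = β_{n,λ}^{(p)}(0)`. -/
def genBeta (lam : ℝ) (p : ℤ) (n : ℕ) : ℝ := genBetaPoly lam p 0 n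

/-- The degenerate type Eulerian numbers, defined by
`(-1)^{n-m} A_λ(n,m) = Σ_{k=0}^{n-m} λ^k (1)_{k+1,1/λ} C(n-k,m) S_{2,λ}(n,k)`. -/
def Eul (lam : ℝ) (n m : ℕ) : ℝ :=
  (-1 : ℝ) ^ (n - m) * ∑ k ∈ Finset.range (n - m + 1),
    lam ^ k * dfall 1 (k + 1) (1 / lam) * ((n - k).choose m : ℝ) * S2 lam n k

lemma dfall_zero (x lam : ℝ) : dfall x 0 lam = 1 := by simp [dfall]

lemma dfall_succ (x lam : ℝ) (n : ℕ) :
    dfall x (n+1) lam = dfall x n lam * (x - n * lam) := Finset.prod_range_succ _ _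

lemma S_rec (lam x : ℝ) (n : ℕ) :
    ∑ l ∈ Icc 1 (n+1), (-lam)^(l-1) * ((l-1).factorial:ℝ) * ((n+1).choose l : ℝ) * dfall x (n+1-l) lam
  = (∑ l ∈ Icc 1 n, (-lam)^(l-1) * ((l-1).factorial:ℝ) * (n.choose l : ℝ) * dfall x (n-l) lam) * (x - n*lam)
    + dfall x n lam := by
  have hconv : ∀ m : ℕ, (Icc 1 m) = Ico 1 (m+1) := fun m => (Finset.Ico_add_one_right_eq_Icc 1 m).symm
  rw [hconv, hconv, Finset.sum_Ico_eq_sum_range, Finset.sum_Ico_eq_sum_range]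
  simp only [Nat.add_sub_cancel, Nat.add_sub_cancel_left, Nat.succ_sub_succ, Nat.sub_zero]
  have hLHS : (∑ i ∈ range (n+1),
      (-lam)^i * (i.factorial:ℝ) * ((n+1).choose (1+i) : ℝ) * dfall x (n+1-(1+i)) lam)
      = (∑ i ∈ range (n+1), (-lam)^i * (i.factorial:ℝ) * (n.choose (i+1) : ℝ) * dfall x (n-i) lam)
      + (∑ i ∈ range (n+1), (-lam)^i * (i.factorial:ℝ) * (n.choose i : ℝ) * dfall x (n-i) lam) := by
    rw [← Finset.sum_add_distrib]
    refine Finset.sum_congr rfl fun i _ => ?_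
    have e1 : n + 1 - (1 + i) = n - i := by omega
    rw [e1, add_comm 1 i, Nat.choose_succ_succ' n i]
    push_cast
    ring
  rw [hLHS]
  rw [Finset.sum_range_succ _ n, Nat.choose_succ_self]
  rw [Finset.sum_range_succ' (fun i => (-lam)^i * (i.factorial:ℝ) * (n.choose i : ℝ) * dfall x (n-i) lam) n]
  simp only [Nat.choose_zero_right, Nat.factorial_zero, pow_zero, Nat.cast_one, Nat.sub_zero,
    Nat.cast_zero, mul_zero, zero_mul, add_zero, one_mul, mul_one]
  rw [← add_assoc]
  congr 1
  rw [Finset.sum_mul, ← Finset.sum_add_distrib]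
  refine Finset.sum_congr rfl fun i hi => ?_
  rw [Finset.mem_range] at hi
  have h1 : n - i = (n - (i+1)) + 1 := by omega
  have h2 : ((n - (i+1) : ℕ) : ℝ) = (n:ℝ) - (i:ℝ) - 1 := by
    push_cast [Nat.cast_sub (by omega : i + 1 ≤ n)]; ring
  rw [h1, dfall_succ, h2]
  have h3 : ((i+1).factorial : ℝ) = ((i:ℝ)+1) * (i.factorial:ℝ) := by
    rw [Nat.factorial_succ]; push_cast; ring
  rw [h3]
  ring

lemma dfall_hasDerivAt (lam x : ℝ) (n : ℕ) :
    HasDerivAt (fun y => dfall y n lam)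
      (∑ l ∈ Icc 1 n, (-lam)^(l-1) * ((l-1).factorial:ℝ) * (n.choose l : ℝ) * dfall x (n-l) lam) x := by
  induction n with
  | zero =>
      simp only [Icc_self, Finset.Icc_eq_empty_of_lt (by norm_num : (1:ℕ) > 0), Finset.sum_empty]
      have : (fun y => dfall y 0 lam) = fun _ => (1:ℝ) := by
        funext y; exact dfall_zero y lam
      rw [this]
      simpa using hasDerivAt_const x (1:ℝ)
  | succ n ih =>
      have h : HasDerivAt (fun y => dfall y n lam * (y - n * lam))
          ((∑ l ∈ Icc 1 n, (-lam)^(l-1) * ((l-1).factorial:ℝ) * (n.choose l : ℝ) * dfall x (n-l) lam) * (x - n*lam)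
            + dfall x n lam * 1) x := by
        exact ih.mul ((hasDerivAt_id x).sub_const (n*lam))
      have heq : (fun y => dfall y (n+1) lam) = fun y => dfall y n lam * (y - n * lam) := by
        funext y; exact dfall_succ y lam n
      rw [heq]
      convert h using 1
      rw [mul_one, S_rec]


lemma coeff_degExp (lam x : ℝ) (n : ℕ) :
    PowerSeries.coeff n (degExp lam x) = dfall x n lam / n.factorial := by
  simp [degExp]

lemma coeff_pow_one_sub_degExp (lam : ℝ) {j k : ℕ} (h : j < k) :
    PowerSeries.coeff j ((1 - degExp lam 1) ^ k) = 0 := by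
  have hX : (PowerSeries.X : PowerSeries ℝ) ∣ (1 - degExp lam 1) := by
    rw [PowerSeries.X_dvd_iff]
    simp [degExp, dfall_zero]
  have hXk : (PowerSeries.X : PowerSeries ℝ) ^ k ∣ (1 - degExp lam 1) ^ k :=
    pow_dvd_pow_of_dvd hX k
  exact (PowerSeries.X_pow_dvd_iff.mp hXk) j h

lemma coeff_trunc (lam : ℝ) (p : ℤ) {j m n : ℕ} (hj : j ≤ m) (hmn : m ≤ n) :
    PowerSeries.coeff j (∑ k ∈ Finset.range (m + 1),
        (rising (1 - lam) k * rising 1 k / (rising ((p : ℝ) + 2) k * k.factorial)) •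
          ((1 - degExp lam 1) ^ k))
    = PowerSeries.coeff j (∑ k ∈ Finset.range (n + 1),
        (rising (1 - lam) k * rising 1 k / (rising ((p : ℝ) + 2) k * k.factorial)) •
          ((1 - degExp lam 1) ^ k)) := by
  rw [← Finset.sum_range_add_sum_Ico _ (by omega : m + 1 ≤ n + 1), map_add]
  have : PowerSeries.coeff j (∑ k ∈ Finset.Ico (m+1) (n+1),
      (rising (1 - lam) k * rising 1 k / (rising ((p : ℝ) + 2) k * k.factorial)) •
        ((1 - degExp lam 1) ^ k)) = 0 := by
    rw [map_sum]
    refine Finset.sum_eq_zero fun k hk => ?_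
    rw [Finset.mem_Ico] at hk
    rw [PowerSeries.coeff_smul, coeff_pow_one_sub_degExp lam (by omega), smul_zero]
  rw [this, add_zero]

lemma genBetaPoly_expand (lam : ℝ) (p : ℤ) (x : ℝ) {m n : ℕ} (hmn : m ≤ n) :
    genBetaPoly lam p x m = ∑ j ∈ Finset.range (m+1),
      ((m.factorial : ℝ) * PowerSeries.coeff j (∑ k ∈ Finset.range (n + 1),
        (rising (1 - lam) k * rising 1 k / (rising ((p : ℝ) + 2) k * k.factorial)) •
          ((1 - degExp lam 1) ^ k)) / ((m-j).factorial : ℝ)) * dfall x (m-j) lam := by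
  rw [genBetaPoly, PowerSeries.coeff_mul, Finset.Nat.sum_antidiagonal_eq_sum_range_succ_mk,
    Finset.mul_sum]
  refine Finset.sum_congr rfl fun j hj => ?_
  rw [Finset.mem_range] at hj
  rw [coeff_trunc lam p (by omega : j ≤ m) hmn, coeff_degExp]
  ring


lemma sum_triangle (n : ℕ) (F : ℕ → ℕ → ℝ) :
    ∑ j ∈ range (n+1), ∑ l ∈ Icc 1 (n-j), F j l
      = ∑ l ∈ Icc 1 n, ∑ j ∈ range (n-l+1), F j l := by
  rw [Finset.sum_sigma', Finset.sum_sigma']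
  refine Finset.sum_nbij' (fun x => ⟨x.2, x.1⟩) (fun x => ⟨x.2, x.1⟩) ?_ ?_ (fun _ _ => rfl)
    (fun _ _ => rfl) (fun _ _ => rfl) <;>
  simp only [Finset.mem_range, Finset.mem_Icc, Sigma.forall, Finset.mem_sigma] <;>
  rintro a b ⟨h1, h2⟩ <;>
  omega

theorem stmt13 (lam : ℝ) (p : ℤ) (hp : -1 ≤ p) (n : ℕ) (hn : 1 ≤ n) (x : ℝ) :
    deriv (fun y => genBetaPoly lam p y n) x =
      ∑ l ∈ Finset.Icc 1 n,
        (-lam) ^ (l - 1) * ((l - 1).factorial : ℝ) * (n.choose l : ℝ) *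
          genBetaPoly lam p x (n - l) := by
  set A : ℕ → ℝ := fun j => PowerSeries.coeff j (∑ k ∈ Finset.range (n + 1),
      (rising (1 - lam) k * rising 1 k / (rising ((p : ℝ) + 2) k * k.factorial)) •
        ((1 - degExp lam 1) ^ k)) with hA
  have hAfold : ∀ j, PowerSeries.coeff j (∑ k ∈ Finset.range (n + 1),
      (rising (1 - lam) k * rising 1 k / (rising ((p : ℝ) + 2) k * k.factorial)) •
        ((1 - degExp lam 1) ^ k)) = A j := fun _ => rfl
  have hfun : (fun y => genBetaPoly lam p y n) = fun y => ∑ j ∈ range (n+1),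
      ((n.factorial:ℝ) * A j / ((n-j).factorial:ℝ)) * dfall y (n-j) lam := by
    funext y; exact genBetaPoly_expand lam p y (le_refl n)
  have hD : HasDerivAt (fun y => genBetaPoly lam p y n)
      (∑ j ∈ range (n+1), ((n.factorial:ℝ) * A j / ((n-j).factorial:ℝ)) *
        (∑ l ∈ Icc 1 (n-j), (-lam)^(l-1)*((l-1).factorial:ℝ)*((n-j).choose l : ℝ)*dfall x (n-j-l) lam)) x := by
    rw [hfun]
    exact HasDerivAt.fun_sum fun j _ => (dfall_hasDerivAt lam x (n-j)).const_mul _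
  rw [hD.deriv]
  calc
    ∑ j ∈ range (n+1), ((n.factorial:ℝ) * A j / ((n-j).factorial:ℝ)) *
        (∑ l ∈ Icc 1 (n-j), (-lam)^(l-1)*((l-1).factorial:ℝ)*((n-j).choose l : ℝ)*dfall x (n-j-l) lam)
      = ∑ j ∈ range (n+1), ∑ l ∈ Icc 1 (n-j),
          ((n.factorial:ℝ) * A j / ((n-j).factorial:ℝ)) *
            ((-lam)^(l-1)*((l-1).factorial:ℝ)*((n-j).choose l : ℝ)*dfall x (n-j-l) lam) := by
        exact Finset.sum_congr rfl fun j _ => Finset.mul_sum _ _ _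
    _ = ∑ l ∈ Icc 1 n, ∑ j ∈ range (n-l+1),
          ((n.factorial:ℝ) * A j / ((n-j).factorial:ℝ)) *
            ((-lam)^(l-1)*((l-1).factorial:ℝ)*((n-j).choose l : ℝ)*dfall x (n-j-l) lam) :=
        sum_triangle n _
    _ = ∑ l ∈ Finset.Icc 1 n, (-lam) ^ (l - 1) * ((l - 1).factorial : ℝ) * (n.choose l : ℝ) *
          genBetaPoly lam p x (n - l) := by
        refine Finset.sum_congr rfl fun l hl => ?_
        rw [Finset.mem_Icc] at hl
        rw [genBetaPoly_expand lam p x (Nat.sub_le n l), Finset.mul_sum]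
        refine Finset.sum_congr rfl fun j hj => ?_
        rw [Finset.mem_range] at hj
        have e : n - j - l = n - l - j := by omega
        rw [e]
        have hlnj : l ≤ n - j := by omega
        have hCn : ((n.choose l : ℕ):ℝ) * (l.factorial:ℝ) * ((n-l).factorial:ℝ) = (n.factorial:ℝ) := by
          exact_mod_cast Nat.choose_mul_factorial_mul_factorial hl.2
        have hCnj0 := Nat.choose_mul_factorial_mul_factorial hlnj
        rw [e] at hCnj0
        have hCnj : (((n-j).choose l : ℕ):ℝ) * (l.factorial:ℝ) * ((n-l-j).factorial:ℝ) = ((n-j).factorial:ℝ) := by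
          exact_mod_cast hCnj0
        rw [hAfold j]
        generalize A j = a
        rw [← hCn, ← hCnj]
        have hne1 : (((n-j).choose l : ℕ):ℝ) ≠ 0 :=
          Nat.cast_ne_zero.mpr (Nat.choose_pos hlnj).ne'
        have hne2 : (l.factorial:ℝ) ≠ 0 := Nat.cast_ne_zero.mpr l.factorial_ne_zero
        have hne3 : ((n-l-j).factorial:ℝ) ≠ 0 := Nat.cast_ne_zero.mpr (n-l-j).factorial_ne_zero
        field_simp
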